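/- For ξ ∈ [0,1), let Δ_{n,ξ} = {w ∈ ℝⁿ : 0 ≤ wᵢ ≤ 1/((1−ξ)n) for all i, ∑_{i=1}^{n} wᵢ = 1}. If w⁽¹⁾ ∈ Δ_{n,ε₁} and w⁽²⁾ ∈ Δ_{n,ε₂} with ε₁, ε₂ ∈ [0,1), then the total variation distance satisfies TV(w⁽¹⁾, w⁽²⁾) ≤ max{ε₁, ε₂} / (1 − min{ε₁, ε₂}). -/

import Mathlib

open Real
open scoped BigOperators Classical

lemma tv_aux_between_Delta {n : ℕ} (ε₁ ε₂ : ℝ)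
    (hε₁1 : ε₁ < 1) (hε₂1 : ε₂ < 1) (hle : ε₂ ≤ ε₁)
    (w₁ w₂ : Fin n → ℝ)
    (hw₁ : ∀ i, 0 ≤ w₁ i ∧ w₁ i ≤ 1 / ((1 - ε₁) * n)) (hs₁ : ∑ i, w₁ i = 1)
    (hw₂ : ∀ i, 0 ≤ w₂ i ∧ w₂ i ≤ 1 / ((1 - ε₂) * n)) (hs₂ : ∑ i, w₂ i = 1) :
    (1/2) * ∑ i, |w₁ i - w₂ i| ≤ ε₁ / (1 - ε₂) := by
  rcases Nat.eq_zero_or_pos n with h0 | hn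
  · subst h0; simp at hs₁
  have hn0 : (0:ℝ) < n := by exact_mod_cast hn
  have h1 : (0:ℝ) < 1 - ε₁ := by linarith
  have h2 : (0:ℝ) < 1 - ε₂ := by linarith
  set c₁ : ℝ := 1 / ((1 - ε₁) * n) with hc₁
  set c₂ : ℝ := 1 / ((1 - ε₂) * n) with hc₂
  set r : ℝ := (1 - ε₁) / (1 - ε₂) with hr
  have hc₂pos : 0 < c₂ := by positivity
  have hc₁c₂ : c₂ ≤ c₁ := by
    rw [hc₁, hc₂]
    apply one_div_le_one_div_of_le (by positivity)
    nlinarith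
  have hrc : r * c₁ = c₂ := by
    rw [hr, hc₁, hc₂]; field_simp
  have hid : ∑ i, |w₁ i - w₂ i| = 2 * ∑ i, max (w₂ i - w₁ i) 0 := by
    have key : ∀ i ∈ Finset.univ, |w₁ i - w₂ i|
        = 2 * max (w₂ i - w₁ i) 0 - (w₂ i - w₁ i) := by
      intro i _
      rcases le_total (w₁ i) (w₂ i) with h | h
      · rw [abs_of_nonpos (by linarith), max_eq_left (by linarith)]; ring
      · rw [abs_of_nonneg (by linarith), max_eq_right (by linarith)]; ring
    rw [Finset.sum_congr rfl key, Finset.sum_sub_distrib, Finset.sum_sub_distrib,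
      hs₁, hs₂, ← Finset.mul_sum]
    ring
  have hpt : ∀ i ∈ Finset.univ, max (w₂ i - w₁ i) 0 ≤ c₂ - min (w₁ i) c₂ := by
    intro i _
    have h2i := (hw₂ i).2
    apply max_le
    · have : min (w₁ i) c₂ ≤ w₁ i := min_le_left _ _
      linarith
    · have : min (w₁ i) c₂ ≤ c₂ := min_le_right _ _
      linarith
  have hmin : ∀ i ∈ Finset.univ, r * w₁ i ≤ min (w₁ i) c₂ := by
    intro i _
    obtain ⟨h0i, h1i⟩ := hw₁ i
    have hr1 : r ≤ 1 := by rw [hr]; rw [div_le_one h2]; linarith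
    have hr0 : 0 < r := by positivity
    apply le_min
    · nlinarith
    · calc r * w₁ i ≤ r * c₁ := by nlinarith
        _ = c₂ := hrc
  have hS : ∑ i, max (w₂ i - w₁ i) 0 ≤ (n : ℝ) * c₂ - r := by
    calc ∑ i, max (w₂ i - w₁ i) 0 ≤ ∑ i : Fin n, (c₂ - min (w₁ i) c₂) :=
          Finset.sum_le_sum hpt
      _ = (n : ℝ) * c₂ - ∑ i, min (w₁ i) c₂ := by
          rw [Finset.sum_sub_distrib, Finset.sum_const]
          simp [mul_comm]
      _ ≤ (n : ℝ) * c₂ - ∑ i, r * w₁ i := by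
          have := Finset.sum_le_sum hmin
          linarith
      _ = (n : ℝ) * c₂ - r := by rw [← Finset.mul_sum, hs₁, mul_one]
  have hnc : (n : ℝ) * c₂ = 1 / (1 - ε₂) := by
    rw [hc₂]; field_simp
  rw [hid]
  have : (n:ℝ) * c₂ - r = ε₁ / (1 - ε₂) := by
    rw [hnc, hr]; field_simp; ring
  linarith

/-- total variation distance bound between probability weight vectors
in `Δ_{n,ε₁}` and `Δ_{n,ε₂}`. -/
theorem tv_bound_between_Delta {n : ℕ} (ε₁ ε₂ : ℝ)
    (hε₁0 : 0 ≤ ε₁) (hε₁1 : ε₁ < 1) (hε₂0 : 0 ≤ ε₂) (hε₂1 : ε₂ < 1)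
    (w₁ w₂ : Fin n → ℝ)
    (hw₁ : ∀ i, 0 ≤ w₁ i ∧ w₁ i ≤ 1 / ((1 - ε₁) * n)) (hs₁ : ∑ i, w₁ i = 1)
    (hw₂ : ∀ i, 0 ≤ w₂ i ∧ w₂ i ≤ 1 / ((1 - ε₂) * n)) (hs₂ : ∑ i, w₂ i = 1) :
    (1/2) * ∑ i, |w₁ i - w₂ i| ≤ max ε₁ ε₂ / (1 - min ε₁ ε₂) := by
  rcases le_total ε₂ ε₁ with h | h
  · rw [max_eq_left h, min_eq_right h]
    exact tv_aux_between_Delta ε₁ ε₂ hε₁1 hε₂1 h w₁ w₂ hw₁ hs₁ hw₂ hs₂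
  · rw [max_eq_right h, min_eq_left h]
    have := tv_aux_between_Delta ε₂ ε₁ hε₂1 hε₁1 h w₂ w₁ hw₂ hs₂ hw₁ hs₁
    simpa [abs_sub_comm] using this
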